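/- Let p : ℤ → ℝ, v ∈ ℝ, and (t_0, x_0) ∈ ℝ × 𝕋. If Π(v) is non-empty, then there exists a non-trivial solution u of ∂_t u = iP(D)u (with u_0 ≠ 0 in L²(𝕋)) satisfying u(t_0+t, x_0 − vt) = 0 for all t ∈ ℝ; in particular, the unique continuation property from the line segment fails. One may take u_0(x) = e^{−i(p(k_1)t_0 + k_1 x_0)} e^{i k_1 x} − e^{−i(p(k_2)t_0 + k_2 x_0)} e^{i k_2 x} for any k_1 ≠ k_2 with λ_{k_1}(v) = λ_{k_2}(v). -/
import Mathlib

open MeasureTheory Real Complex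
open scoped ENNReal

noncomputable def lamk (p : ℤ → ℝ) (v : ℝ) (k : ℤ) : ℝ := p k - k * v
def XiSet (p : ℤ → ℝ) (v : ℝ) (k : ℤ) : Set ℤ := {m | lamk p v m = lamk p v k}
def PiV (p : ℤ → ℝ) (v : ℝ) : Set ℤ := {k | ∃ m : ℤ, m ≠ k ∧ lamk p v k = lamk p v m}
def LamV (p : ℤ → ℝ) (v : ℝ) : Set ℝ := Set.range (lamk p v)
noncomputable def gammaP (p : ℤ → ℝ) (v : ℝ) : ℝ≥0∞ :=
  ⨆ (W : Finset ℝ) (_ : ↑W ⊆ LamV p v),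
    ⨅ (a : ℝ) (_ : a ∈ LamV p v \ ↑W) (b : ℝ) (_ : b ∈ LamV p v \ ↑W) (_ : a ≠ b),
      ENNReal.ofReal |a - b|
noncomputable def solD (p : ℤ → ℝ) (c : ℤ → ℂ) (t x : ℝ) : ℂ :=
  ∑' k : ℤ, c k * Complex.exp (Complex.I * ((p k : ℂ) * (t : ℂ) + (k : ℂ) * (x : ℂ)))
noncomputable def specC (p : ℤ → ℝ) (t0 x0 : ℝ) (k1 k2 : ℤ) : ℤ → ℂ := fun k =>
  if k = k1 then Complex.exp (-(Complex.I * ((p k1 : ℂ) * (t0 : ℂ) + (k1 : ℂ) * (x0 : ℂ))))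
  else if k = k2 then -Complex.exp (-(Complex.I * ((p k2 : ℂ) * (t0 : ℂ) + (k2 : ℂ) * (x0 : ℂ))))
  else 0

lemma spec_key (p : ℤ → ℝ) (v : ℝ) (t0 x0 : ℝ) (k1 k2 : ℤ) (h12 : k1 ≠ k2)
    (hlam : lamk p v k1 = lamk p v k2) :
    Memℓp (specC p t0 x0 k1 k2) 2 ∧ specC p t0 x0 k1 k2 ≠ 0 ∧
      ∀ t : ℝ, solD p (specC p t0 x0 k1 k2) (t0 + t) (x0 - v * t) = 0 := by
  set c := specC p t0 x0 k1 k2 with hc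
  have hzero : ∀ k : ℤ, k ∉ ({k1, k2} : Finset ℤ) → c k = 0 := by
    intro k hk
    simp only [Finset.mem_insert, Finset.mem_singleton, not_or] at hk
    simp [hc, specC, hk.1, hk.2]
  refine ⟨?_, ?_, ?_⟩
  · apply memℓp_gen
    apply summable_of_ne_finset_zero (s := {k1, k2})
    intro k hk
    rw [hzero k hk]
    simp
  · intro h
    have : c k1 = 0 := congrFun h k1
    simp [hc, specC, Complex.exp_ne_zero] at this
  · intro t
    unfold solD
    rw [tsum_eq_sum (s := {k1, k2}) (fun k hk => by rw [hzero k hk]; simp)]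
    rw [Finset.sum_pair h12]
    simp only [hc, specC, if_pos rfl, if_neg h12.symm, if_true, eq_self_iff_true, neg_mul]
    rw [← Complex.exp_add, ← Complex.exp_add]
    have hmain : ∀ k : ℤ, -(Complex.I * ((p k : ℂ) * (t0 : ℂ) + (k : ℂ) * (x0 : ℂ)))
        + Complex.I * ((p k : ℂ) * ((t0 + t : ℝ) : ℂ) + (k : ℂ) * ((x0 - v * t : ℝ) : ℂ))
        = Complex.I * ((lamk p v k : ℝ) : ℂ) * (t : ℂ) := by
      intro k
      simp only [lamk]
      push_cast
      ring
    rw [hmain k1, hmain k2, hlam]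
    ring

theorem stmt_5 (p : ℤ → ℝ) (v : ℝ) (t0 x0 : ℝ) (hne : (PiV p v).Nonempty) :
    (∃ c : ℤ → ℂ, Memℓp c 2 ∧ c ≠ 0 ∧
      ∀ t : ℝ, solD p c (t0 + t) (x0 - v * t) = 0) ∧
    (∀ k1 k2 : ℤ, k1 ≠ k2 → lamk p v k1 = lamk p v k2 →
      Memℓp (specC p t0 x0 k1 k2) 2 ∧ specC p t0 x0 k1 k2 ≠ 0 ∧
      ∀ t : ℝ, solD p (specC p t0 x0 k1 k2) (t0 + t) (x0 - v * t) = 0) := by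
  constructor
  · obtain ⟨k, m, hmk, hlam⟩ := hne
    exact ⟨specC p t0 x0 k m, spec_key p v t0 x0 k m (Ne.symm hmk) hlam⟩
  · intro k1 k2 h12 hlam
    exact spec_key p v t0 x0 k1 k2 h12 hlam
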